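/- Tau function multiplicativity implies invariance of Schwarz's form under change of dualizing element: suppose τ : G × X → k^× satisfies the cocycle identity τ_L(fg) = τ_{gL}(f)·τ_L(g) for an abelian group G acting on a set X (with values in an abelian group k^×). Fix L ∈ X and suppose g, g' ∈ G satisfy gL = g'L. Then τ_L(g³)/τ_L(g)³ = τ_L((g')³)/τ_L(g')³. -/
import Mathlib


/-- Let `G` be an abelian group acting on a set `X`, and let
`τ : X → G → kˣ` (values in an abelian group `k`) satisfy the cocycle identity
`τ_L(fg) = τ_{gL}(f)·τ_L(g)`.  If `gL = g'L`, then
`τ_L(g³)/τ_L(g)³ = τ_L(g'³)/τ_L(g')³`. -/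
theorem schwarz_form_independent_of_g {G X k : Type*} [CommGroup G] [CommGroup k]
    [MulAction G X] (τ : X → G → k)
    (hcoc : ∀ (f g : G) (L : X), τ L (f * g) = τ (g • L) f * τ L g)
    (L : X) (g g' : G) (h : g • L = g' • L) :
    τ L (g ^ 3) / (τ L g) ^ 3 = τ L (g' ^ 3) / (τ L g') ^ 3 := by
  set f : G := g' * g⁻¹ with hf
  have hfg : f * g = g' := by rw [hf]; group
  have hfix : f • (g • L) = g • L := by
    rw [← mul_smul, hfg, ← h]
  -- g^3 • L = g^2 • (g • L)
  have h3 : (g ^ 3) • L = (g ^ 2) • (g • L) := by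
    rw [← mul_smul, pow_succ]
  have hfix3 : f • ((g ^ 3) • L) = (g ^ 3) • L := by
    rw [h3, smul_comm, hfix]
  -- key: τ_{g³L}(f) = τ_{gL}(f)
  have key : τ ((g ^ 3) • L) f = τ (g • L) f := by
    have e1 : τ (g • L) (g ^ 2 * f) = τ (g • L) (g ^ 2) * τ (g • L) f := by
      rw [hcoc, hfix]
    have e2 : τ (g • L) (g ^ 2 * f) = τ ((g ^ 3) • L) f * τ (g • L) (g ^ 2) := by
      rw [mul_comm (g ^ 2) f, hcoc, h3]
    have := e1.symm.trans e2
    rw [mul_comm (τ (g • L) (g ^ 2))] at this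
    exact (mul_right_cancel this).symm
  -- cube lemma at a fixed point
  have cube : ∀ M : X, f • M = M → τ M (f ^ 3) = (τ M f) ^ 3 := by
    intro M hM
    have h2 : τ M (f ^ 2) = τ M f * τ M f := by
      rw [pow_two, hcoc, hM]
    have h3' : τ M (f ^ 3) = τ M f * τ M (f ^ 2) := by
      rw [show f ^ 3 = f * f ^ 2 by group, hcoc, show (f ^ 2) • M = M by
        rw [pow_two, mul_smul, hM, hM]]
    rw [h3', h2, pow_succ, pow_two, mul_assoc]
  have hg'3 : g' ^ 3 = f ^ 3 * g ^ 3 := by rw [← hfg, mul_pow]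
  have e3 : τ L (g' ^ 3) = (τ (g • L) f) ^ 3 * τ L (g ^ 3) := by
    rw [hg'3, hcoc, cube _ hfix3, key]
  have e1 : τ L g' = τ (g • L) f * τ L g := by rw [← hfg, hcoc]
  rw [e3, e1, mul_pow, mul_div_mul_left_eq_div]
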